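/- Let Γ = (G, σ) be a balanced signed graph on n vertices. Then, for every integer k with 1 ≤ k ≤ n−1, the k-token signed graph F_k(Γ) is also balanced. -/

import Mathlib

open scoped Classical

/-- A signed graph: a simple graph together with a signature assigning a sign `±1`
(an element of `ℤˣ`) to each pair of vertices (only the values on edges are relevant). -/
structure SignedGraph (V : Type*) where
  G : SimpleGraph V
  sign : V → V → ℤˣ
  sign_symm : ∀ u v, sign u v = sign v u

namespace SignedGraph

variable {V W : Type*}

/-- The sign function, as a function on unordered pairs. -/
def esign (Γ : SignedGraph V) : Sym2 V → ℤˣ :=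
  Sym2.lift ⟨Γ.sign, Γ.sign_symm⟩

/-- The sign of a walk: the product of the signs of its edges. -/
def walkSign (Γ : SignedGraph V) {u v : V} (p : Γ.G.Walk u v) : ℤˣ :=
  (p.edges.map Γ.esign).prod

/-- A signed graph is balanced if every cycle is positive. -/
def Balanced (Γ : SignedGraph V) : Prop :=
  ∀ ⦃u : V⦄ (p : Γ.G.Walk u u), p.IsCycle → Γ.walkSign p = 1

/-- Switching at a vertex subset `U`: reverse the sign of every edge with exactly one
endpoint in `U`. -/
noncomputable def switch (Γ : SignedGraph V) (U : Set V) : SignedGraph V where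
  G := Γ.G
  sign u v := (if u ∈ U then (-1 : ℤˣ) else 1) * (if v ∈ U then (-1 : ℤˣ) else 1) * Γ.sign u v
  sign_symm u v := by
    rw [Γ.sign_symm u v, mul_comm (if u ∈ U then (-1 : ℤˣ) else 1) (if v ∈ U then (-1 : ℤˣ) else 1)]

/-- Two signed graphs on the same vertex set are "the same signed graph" when they have the
same underlying graph and the same signature on every edge. -/
def SEq (Γ Γ' : SignedGraph V) : Prop :=
  Γ.G = Γ'.G ∧ ∀ u v, Γ.G.Adj u v → Γ.sign u v = Γ'.sign u v

/-- Switching equivalence of two signed graphs on the same vertex set. -/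
def SwitchEquiv (Γ Γ' : SignedGraph V) : Prop :=
  ∃ U : Set V, (Γ.switch U).SEq Γ'

/-- A sign-preserving isomorphism of signed graphs. -/
structure Iso (Γ : SignedGraph V) (Γ' : SignedGraph W) where
  toEquiv : V ≃ W
  adj_iff : ∀ u v, Γ.G.Adj u v ↔ Γ'.G.Adj (toEquiv u) (toEquiv v)
  sign_eq : ∀ u v, Γ.G.Adj u v → Γ.sign u v = Γ'.sign (toEquiv u) (toEquiv v)

/-- Switching isomorphism: `Γ'` is isomorphic to a switching of `Γ`. -/
def SwitchIso (Γ : SignedGraph V) (Γ' : SignedGraph W) : Prop :=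
  ∃ U : Set V, Nonempty ((Γ.switch U).Iso Γ')

/-- The negation of a signed graph: all edge signs reversed. -/
def neg (Γ : SignedGraph V) : SignedGraph V where
  G := Γ.G
  sign u v := -Γ.sign u v
  sign_symm u v := by rw [Γ.sign_symm]

variable [DecidableEq V]

/-- The underlying graph of the `k`-token graph: vertices are the `k`-subsets of `V`,
with `A ~ B` when `A Δ B = {a, b}`, `a ∈ A`, `b ∈ B` and `a ~ b` in `G`. -/
def tokenAdj (G : SimpleGraph V) (k : ℕ) : SimpleGraph {A : Finset V // A.card = k} where
  Adj A B := ∃ a b, a ∈ A.1 ∧ b ∈ B.1 ∧ G.Adj a b ∧ symmDiff A.1 B.1 = {a, b}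
  symm := by
    constructor
    rintro A B ⟨a, b, ha, hb, hab, hs⟩
    exact ⟨b, a, hb, ha, hab.symm, by rw [symmDiff_comm, hs, Finset.pair_comm]⟩
  loopless := by
    constructor
    rintro A ⟨a, b, ha, hb, hab, hs⟩
    rw [symmDiff_self] at hs
    have h : a ∈ ({a, b} : Finset V) := Finset.mem_insert_self a {b}
    rw [← hs] at h
    simp at h

/-- The `k`-token signed graph: the edge obtained by moving a token along `ab`
carries the sign of `ab`. -/
def token (Γ : SignedGraph V) (k : ℕ) : SignedGraph {A : Finset V // A.card = k} where
  G := tokenAdj Γ.G k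
  sign A B := ∏ a ∈ A.1 \ B.1, ∏ b ∈ B.1 \ A.1, Γ.sign a b
  sign_symm A B := by
    rw [Finset.prod_comm]
    exact Finset.prod_congr rfl fun b _ => Finset.prod_congr rfl fun a _ => Γ.sign_symm a b

/-- The signed adjacency matrix (over `ℝ`). -/
noncomputable def adjMatrix (Γ : SignedGraph V) [Fintype V] : Matrix V V ℝ :=
  Matrix.of fun u v => if Γ.G.Adj u v then ((Γ.sign u v : ℤ) : ℝ) else 0

/-- The signed Laplacian matrix `L = D - A` (over `ℝ`). -/
noncomputable def lapMatrix (Γ : SignedGraph V) [Fintype V] : Matrix V V ℝ :=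
  Matrix.diagonal (fun v => (Γ.G.degree v : ℝ)) - Γ.adjMatrix

/-- The quantity `ℓ_m(Γ)`. -/
noncomputable def ellm (Γ : SignedGraph V) [Fintype V] (m : ℕ) : ℝ :=
  (∑ r ∈ Finset.range (m + 1),
      ((Γ.G.adjMatrix ℝ ^ r).trace - (Γ.adjMatrix ^ r).trace)) /
  (∑ r ∈ Finset.range (m + 1),
      ((Γ.G.adjMatrix ℝ ^ r).trace + |(Γ.adjMatrix ^ r).trace|))

/-- The unbalance level `ℓ(Γ) = max {ℓ_{n-1}(Γ), ℓ_n(Γ)}`. -/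
noncomputable def unbalanceLevel (Γ : SignedGraph V) [Fintype V] : ℝ :=
  max (Γ.ellm (Fintype.card V - 1)) (Γ.ellm (Fintype.card V))

/-- The frustration index: the minimum number of negative edges whose deletion yields a
balanced signed graph. -/
noncomputable def frustrationIndex (Γ : SignedGraph V) : ℕ :=
  sInf {m : ℕ | ∃ F : Finset (Sym2 V), F.card = m ∧ ↑F ⊆ Γ.G.edgeSet ∧
    (∀ e ∈ F, Γ.esign e = -1) ∧
    Balanced ⟨Γ.G.deleteEdges ↑F, Γ.sign, Γ.sign_symm⟩}

/-- The signed complement of a balanced signed graph, with respect to a switching function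
`s` witnessing balance (`A_σ = S A S`): the signed graph on the complement graph with
adjacency matrix `S Ā S`, i.e. with sign `s u * s v` on each complement edge. -/
def scompl (Γ : SignedGraph V) (s : V → ℤˣ) : SignedGraph V where
  G := Γ.Gᶜ
  sign u v := s u * s v
  sign_symm u v := mul_comm _ _

/-- The real diagonal `±1` matrix associated with `s : V → ℤˣ`. -/
noncomputable def diagS [Fintype V] (s : V → ℤˣ) : Matrix V V ℝ :=
  Matrix.diagonal fun v => ((s v : ℤ) : ℝ)

end SignedGraph

/-- The all-positive signed complete graph on `V`. -/
def allPos (V : Type*) : SignedGraph V := ⟨⊤, fun _ _ => 1, fun _ _ => rfl⟩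

/-- The `(n; 1, k)`-binomial matrix. -/
noncomputable def binomB (V : Type*) [Fintype V] [DecidableEq V] (k : ℕ) :
    Matrix {A : Finset V // A.card = k} V ℝ :=
  Matrix.of fun A v => if v ∈ A.1 then 1 else 0

/-- The `(n; k₁, k₂)`-binomial matrix. -/
noncomputable def binomB2 (V : Type*) [Fintype V] [DecidableEq V] (k₁ k₂ : ℕ) :
    Matrix {A : Finset V // A.card = k₂} {A : Finset V // A.card = k₁} ℝ :=
  Matrix.of fun A X => if X.1 ⊆ A.1 then 1 else 0

section Aux

open SimpleGraph

namespace SignedGraph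

variable {V : Type*} (Γ : SignedGraph V)

lemma walkSign_nil {u : V} : Γ.walkSign (SimpleGraph.Walk.nil : Γ.G.Walk u u) = 1 := rfl

lemma walkSign_cons {u v w : V} (h : Γ.G.Adj u v) (p : Γ.G.Walk v w) :
    Γ.walkSign (p.cons h) = Γ.sign u v * Γ.walkSign p := by
  simp [walkSign, esign, SimpleGraph.Walk.edges_cons]

lemma walkSign_append {u v w : V} (p : Γ.G.Walk u v) (q : Γ.G.Walk v w) :
    Γ.walkSign (p.append q) = Γ.walkSign p * Γ.walkSign q := by
  simp [walkSign, SimpleGraph.Walk.edges_append]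

lemma walkSign_reverse {u v : V} (p : Γ.G.Walk u v) :
    Γ.walkSign p.reverse = Γ.walkSign p := by
  simp [walkSign, SimpleGraph.Walk.edges_reverse, List.prod_reverse]

lemma walkSign_eq_one_of_closed (hbal : Γ.Balanced) :
    ∀ (n : ℕ) ⦃u : V⦄ (p : Γ.G.Walk u u), p.length ≤ n → Γ.walkSign p = 1 := by
  intro n
  induction n with
  | zero =>
    intro u p hp
    have : p = SimpleGraph.Walk.nil := SimpleGraph.Walk.nil_iff_eq_nil.mp (SimpleGraph.Walk.length_eq_zero_iff.mp (Nat.le_zero.mp hp))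
    subst this; rfl
  | succ n ih =>
    have key : ∀ ⦃w : V⦄ (r : Γ.G.Walk w w), r.length ≤ n + 1 →
        2 ≤ r.support.tail.count w → Γ.walkSign r = 1 := by
      intro w r hrlen hrc
      cases r with
      | nil => simp [SimpleGraph.Walk.support_nil] at hrc
      | cons h' q₂ =>
        rw [SimpleGraph.Walk.support_cons] at hrc
        simp only [List.tail_cons] at hrc
        have hw2 : w ∈ q₂.support := by
          have : 0 < q₂.support.count w := lt_of_lt_of_le (by norm_num) hrc
          exact List.count_pos_iff.mp this
        have hspec := q₂.take_spec hw2
        have hone : (q₂.takeUntil w hw2).support.count w = 1 :=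
          q₂.count_support_takeUntil_eq_one hw2
        have hsupp : q₂.support = (q₂.takeUntil w hw2).support
            ++ (q₂.dropUntil w hw2).support.tail := by
          conv_lhs => rw [← hspec]
          exact SimpleGraph.Walk.support_append _ _
        have hcb : 1 ≤ (q₂.dropUntil w hw2).support.tail.count w := by
          rw [hsupp, List.count_append, hone] at hrc
          omega
        have hbne : 1 ≤ (q₂.dropUntil w hw2).length := by
          by_contra hcon
          have h0 : (q₂.dropUntil w hw2).length = 0 := by omega
          have : q₂.dropUntil w hw2 = SimpleGraph.Walk.nil :=
            SimpleGraph.Walk.nil_iff_eq_nil.mp (SimpleGraph.Walk.length_eq_zero_iff.mp h0)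
          rw [this] at hcb
          simp [SimpleGraph.Walk.support_nil] at hcb
        have hlen : (q₂.takeUntil w hw2).length + (q₂.dropUntil w hw2).length = q₂.length := by
          conv_rhs => rw [← hspec]
          exact (SimpleGraph.Walk.length_append _ _).symm
        have hql : q₂.length + 1 ≤ n + 1 := by
          simpa [SimpleGraph.Walk.length_cons] using hrlen
        have h1 : Γ.walkSign ((q₂.takeUntil w hw2).cons h') = 1 := by
          apply ih
          rw [SimpleGraph.Walk.length_cons]
          omega
        have h2 : Γ.walkSign (q₂.dropUntil w hw2) = 1 := by
          apply ih
          omega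
        have : Γ.walkSign (SimpleGraph.Walk.cons h' q₂)
            = Γ.walkSign ((q₂.takeUntil w hw2).cons h') * Γ.walkSign (q₂.dropUntil w hw2) := by
          rw [walkSign_cons, walkSign_cons, mul_assoc, ← walkSign_append, hspec]
        rw [this, h1, h2, one_mul]
    intro u p hp
    cases p with
    | nil => rfl
    | cons h q =>
      rename_i v
      by_cases hnd : (SimpleGraph.Walk.cons h q).support.tail.Nodup
      · -- tail has no duplicates
        have hq : q.IsPath := by
          rw [SimpleGraph.Walk.isPath_def]
          simpa [SimpleGraph.Walk.support_cons] using hnd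
        by_cases hmem : s(u, v) ∈ q.edges
        · -- the edge is repeated: the walk must be u-v-u
          cases q with
          | nil => exact absurd rfl h.ne
          | cons h'' q₃ =>
            rename_i x
            rw [SimpleGraph.Walk.edges_cons, List.mem_cons] at hmem
            rcases hmem with hmem | hmem
            · have hx : x = u := by
                rw [Sym2.eq_iff] at hmem
                rcases hmem with ⟨h1, h2⟩ | ⟨h1, h2⟩
                · exact absurd h1 h.ne
                · exact h1.symm
              subst hx
              have hq₃ : q₃ = SimpleGraph.Walk.nil := by
                cases q₃ with
                | nil => rfl
                | cons h4 q4 =>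
                  exfalso
                  have hnodup := hq.support_nodup
                  rw [SimpleGraph.Walk.support_cons, SimpleGraph.Walk.support_cons] at hnodup
                  exact (List.nodup_cons.mp ((List.nodup_cons.mp hnodup).2)).1
                    q4.end_mem_support
              subst hq₃
              rw [walkSign_cons, walkSign_cons, walkSign_nil, mul_one, Γ.sign_symm]
              exact Int.units_mul_self _
            · exfalso
              have hv : v ∈ q₃.support := SimpleGraph.Walk.snd_mem_support_of_mem_edges q₃ hmem
              have := hq.support_nodup
              rw [SimpleGraph.Walk.support_cons, List.nodup_cons] at this
              exact this.1 hv
        · -- the walk is a cycle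
          have hcyc : (SimpleGraph.Walk.cons h q).IsCycle :=
            (SimpleGraph.Walk.cons_isCycle_iff q h).mpr ⟨hq, hmem⟩
          exact hbal _ hcyc
      · -- duplicated vertex in the tail: rotate and split
        obtain ⟨w, hw⟩ := List.exists_duplicate_iff_not_nodup.mpr hnd
        have hwc : 2 ≤ (SimpleGraph.Walk.cons h q).support.tail.count w :=
          List.duplicate_iff_two_le_count.mp hw
        have hws : w ∈ (SimpleGraph.Walk.cons h q).support := List.mem_of_mem_tail hw.mem
        set r := (SimpleGraph.Walk.cons h q).rotate w hws with hr
        have hperm : List.Perm r.edges (SimpleGraph.Walk.cons h q).edges :=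
          ((SimpleGraph.Walk.cons h q).rotate_edges w hws).perm
        have hsignEq : Γ.walkSign r = Γ.walkSign (SimpleGraph.Walk.cons h q) := by
          unfold walkSign
          exact (hperm.map _).prod_eq
        have hrlen : r.length ≤ n + 1 := by
          have : r.edges.length = (SimpleGraph.Walk.cons h q).edges.length := hperm.length_eq
          rw [SimpleGraph.Walk.length_edges, SimpleGraph.Walk.length_edges] at this
          omega
        have hrc : 2 ≤ r.support.tail.count w := by
          have hp' : List.Perm r.support.tail (SimpleGraph.Walk.cons h q).support.tail :=
            ((SimpleGraph.Walk.cons h q).support_rotate w hws).perm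
          rw [hp'.count_eq]
          exact hwc
        rw [← hsignEq]
        exact key r hrlen hrc

lemma walkSign_eq_of_same_endpoints (hbal : Γ.Balanced) {u v : V}
    (p q : Γ.G.Walk u v) : Γ.walkSign p = Γ.walkSign q := by
  have h1 : Γ.walkSign (p.append q.reverse) = 1 :=
    Γ.walkSign_eq_one_of_closed hbal (p.append q.reverse).length _ le_rfl
  rw [walkSign_append, walkSign_reverse] at h1
  have h2 := Int.units_mul_self (Γ.walkSign q)
  calc Γ.walkSign p = Γ.walkSign p * (Γ.walkSign q * Γ.walkSign q) := by rw [h2, mul_one]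
    _ = (Γ.walkSign p * Γ.walkSign q) * Γ.walkSign q := by rw [mul_assoc]
    _ = Γ.walkSign q := by rw [h1, one_mul]

lemma exists_potential (hbal : Γ.Balanced) :
    ∃ s : V → ℤˣ, ∀ u v, Γ.G.Adj u v → Γ.sign u v = s u * s v := by
  classical
  have hre : ∀ v : V, Γ.G.Reachable ((Γ.G.connectedComponentMk v).out) v := by
    intro v
    exact SimpleGraph.ConnectedComponent.exact (Quot.out_eq _)
  refine ⟨fun v => Γ.walkSign (hre v).some, ?_⟩
  intro u v h
  have hcc : (Γ.G.connectedComponentMk u).out = (Γ.G.connectedComponentMk v).out := by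
    rw [SimpleGraph.ConnectedComponent.sound h.reachable]
  set pu := (hre u).some with hpu
  set pv := (hre v).some with hpv
  have hq : Γ.walkSign pv
      = Γ.walkSign (((pu.append (SimpleGraph.Walk.cons h SimpleGraph.Walk.nil)).copy hcc rfl)) :=
    Γ.walkSign_eq_of_same_endpoints hbal _ _
  have hq2 : Γ.walkSign (((pu.append (SimpleGraph.Walk.cons h SimpleGraph.Walk.nil)).copy hcc rfl))
      = Γ.walkSign pu * Γ.sign u v := by
    unfold walkSign
    rw [SimpleGraph.Walk.edges_copy, SimpleGraph.Walk.edges_append]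
    simp [esign, walkSign]
  have hsq := Int.units_mul_self (Γ.walkSign pu)
  rw [hq2] at hq
  calc Γ.sign u v = (Γ.walkSign pu * Γ.walkSign pu) * Γ.sign u v := by rw [hsq, one_mul]
    _ = Γ.walkSign pu * (Γ.walkSign pu * Γ.sign u v) := by rw [mul_assoc]
    _ = Γ.walkSign pu * Γ.walkSign pv := by rw [hq]

lemma walkSign_eq_pot (s : V → ℤˣ)
    (hs : ∀ u v, Γ.G.Adj u v → Γ.sign u v = s u * s v)
    {u v : V} (p : Γ.G.Walk u v) : Γ.walkSign p = s u * s v := by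
  induction p with
  | nil => rw [walkSign_nil, Int.units_mul_self]
  | cons h q ih =>
    rename_i x y z
    rw [walkSign_cons, ih, hs _ _ h, mul_assoc, ← mul_assoc (s y) (s y),
      Int.units_mul_self, one_mul]

lemma balanced_of_pot (s : V → ℤˣ)
    (hs : ∀ u v, Γ.G.Adj u v → Γ.sign u v = s u * s v) : Γ.Balanced := by
  intro u p _
  rw [Γ.walkSign_eq_pot s hs, Int.units_mul_self]

end SignedGraph

end Aux

/-- the `k`-token signed graph of a balanced signed graph is balanced. -/
theorem token_balanced {V : Type*} [Fintype V] [DecidableEq V] (n k : ℕ)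
    (hn : Fintype.card V = n) (hk1 : 1 ≤ k) (hk2 : k ≤ n - 1)
    (Γ : SignedGraph V) (hbal : Γ.Balanced) :
    (Γ.token k).Balanced := by
  classical
  obtain ⟨s, hs⟩ := Γ.exists_potential hbal
  apply (Γ.token k).balanced_of_pot (fun A => ∏ v ∈ A.1, s v)
  intro A B hadj
  obtain ⟨a, b, ha, hb, hab, hsd⟩ := hadj
  have haB : a ∉ B.1 := by
    intro hcon
    have hmem : a ∈ symmDiff A.1 B.1 := by rw [hsd]; simp
    rw [Finset.mem_symmDiff] at hmem
    tauto
  have hbA : b ∉ A.1 := by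
    intro hcon
    have hmem : b ∈ symmDiff A.1 B.1 := by rw [hsd]; simp
    rw [Finset.mem_symmDiff] at hmem
    tauto
  have hAB : A.1 \ B.1 = {a} := by
    ext x
    simp only [Finset.mem_sdiff, Finset.mem_singleton]
    constructor
    · rintro ⟨hx1, hx2⟩
      have hx : x ∈ symmDiff A.1 B.1 := Finset.mem_symmDiff.mpr (Or.inl ⟨hx1, hx2⟩)
      rw [hsd] at hx
      rcases Finset.mem_insert.mp hx with hxx | hxx
      · exact hxx
      · exact absurd (Finset.mem_singleton.mp hxx ▸ hx1) hbA
    · rintro rfl; exact ⟨ha, haB⟩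
  have hBA : B.1 \ A.1 = {b} := by
    ext x
    simp only [Finset.mem_sdiff, Finset.mem_singleton]
    constructor
    · rintro ⟨hx1, hx2⟩
      have hx : x ∈ symmDiff A.1 B.1 := Finset.mem_symmDiff.mpr (Or.inr ⟨hx1, hx2⟩)
      rw [hsd] at hx
      rcases Finset.mem_insert.mp hx with hxx | hxx
      · exact absurd (hxx ▸ hx1) haB
      · exact Finset.mem_singleton.mp hxx
    · rintro rfl; exact ⟨hb, hbA⟩
  have hsign : (Γ.token k).sign A B = Γ.sign a b := by
    show (∏ x ∈ A.1 \ B.1, ∏ y ∈ B.1 \ A.1, Γ.sign x y) = _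
    rw [hAB, hBA]
    simp
  rw [hsign, hs a b hab]
  have hA' : A.1 = insert a (A.1 ∩ B.1) := by
    ext x
    simp only [Finset.mem_insert, Finset.mem_inter]
    constructor
    · intro hx
      by_cases hxB : x ∈ B.1
      · exact Or.inr ⟨hx, hxB⟩
      · left
        have hxs : x ∈ A.1 \ B.1 := Finset.mem_sdiff.mpr ⟨hx, hxB⟩
        rw [hAB] at hxs
        exact Finset.mem_singleton.mp hxs
    · rintro (rfl | ⟨hx, _⟩)
      · exact ha
      · exact hx
  have hB' : B.1 = insert b (A.1 ∩ B.1) := by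
    ext x
    simp only [Finset.mem_insert, Finset.mem_inter]
    constructor
    · intro hx
      by_cases hxA : x ∈ A.1
      · exact Or.inr ⟨hxA, hx⟩
      · left
        have hxs : x ∈ B.1 \ A.1 := Finset.mem_sdiff.mpr ⟨hx, hxA⟩
        rw [hBA] at hxs
        exact Finset.mem_singleton.mp hxs
    · rintro (rfl | ⟨_, hx⟩)
      · exact hb
      · exact hx
  have haC : a ∉ A.1 ∩ B.1 := fun hc => haB (Finset.mem_inter.mp hc).2
  have hbC : b ∉ A.1 ∩ B.1 := fun hc => hbA (Finset.mem_inter.mp hc).1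
  have h1 : (∏ v ∈ A.1, s v) = s a * ∏ v ∈ A.1 ∩ B.1, s v := by
    conv_lhs => rw [hA']
    exact Finset.prod_insert haC
  have h2 : (∏ v ∈ B.1, s v) = s b * ∏ v ∈ A.1 ∩ B.1, s v := by
    conv_lhs => rw [hB']
    exact Finset.prod_insert hbC
  have hP := Int.units_mul_self (∏ v ∈ A.1 ∩ B.1, s v)
  show s a * s b = (∏ v ∈ A.1, s v) * (∏ v ∈ B.1, s v)
  rw [h1, h2, mul_mul_mul_comm, hP, mul_one]
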